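/- For every real r, all complex numbers s, t, and every ρ > 0, ∮_{|z|=ρ} i(rz−1)²(sz−1)²(tz−1)²/z³ dz + conj(∮_{|z|=ρ} i(z+r)²(z+conj(s))²(z+conj(t))²/z⁵ dz) = −4π(r² + s² + t² + 4rs + 4st + 4tr) (circle integrals over the circle of radius ρ centered at 0, counterclockwise). -/

import Mathlib

open Complex Real Metric

lemma my_circleIntegral_add {f g : ℂ → ℂ} {c : ℂ} {R : ℝ} (hf : CircleIntegrable f c R)
    (hg : CircleIntegrable g c R) :
    (∮ z in C(c, R), (f z + g z)) = (∮ z in C(c, R), f z) + ∮ z in C(c, R), g z := by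
  simp only [circleIntegral, smul_add, intervalIntegral.integral_add hf.out hg.out]

lemma key_zint (ρ : ℝ) (hρ : 0 < ρ) (c₀ c₁ c₂ c₃ c₄ c₅ c₆ c₇ c₈ : ℂ) :
    (∮ z in C(0, ρ), (c₀ + c₁*z + c₂*z^2 + c₃*z^3 + c₄*z^4 + c₅*z^5 + c₆*z^6 + c₇*z^7 + c₈*z^8)/z^5)
      = 2 * Real.pi * Complex.I * c₄ := by
  have hne : ∀ z ∈ sphere (0:ℂ) ρ, z ≠ 0 := by
    intro z hz h0
    rw [mem_sphere_zero_iff_norm, h0] at hz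
    simp at hz
    exact hρ.ne' hz.symm
  have hcd : ∀ (c : ℂ) (n : ℕ), ContinuousOn (fun z : ℂ => c / z^n) (sphere (0:ℂ) ρ) :=
    fun c n => continuousOn_const.div ((continuous_pow n).continuousOn)
      (fun z hz => pow_ne_zero _ (hne z hz))
  have hcm : ∀ (c : ℂ) (n : ℕ), ContinuousOn (fun z : ℂ => c * z^n) (sphere (0:ℂ) ρ) :=
    fun c n => continuousOn_const.mul ((continuous_pow n).continuousOn)
  set g : ℂ → ℂ := fun z => c₀/z^5 + c₁/z^4 + c₂/z^3 + c₃/z^2 + c₅ + c₆*z^1 + c₇*z^2 + c₈*z^3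
    with hg
  have hcongr : (∮ z in C(0, ρ), (c₀ + c₁*z + c₂*z^2 + c₃*z^3 + c₄*z^4 + c₅*z^5 + c₆*z^6 + c₇*z^7 + c₈*z^8)/z^5)
      = ∮ z in C(0, ρ), (g z + c₄ / z) := by
    refine circleIntegral.integral_congr hρ.le fun z hz => ?_
    have h := hne z hz
    simp only [hg]
    field_simp
    have hD : (z^5*z^4*z^3*z^2 : ℂ) ≠ 0 :=
      mul_ne_zero (mul_ne_zero (mul_ne_zero (pow_ne_zero _ h) (pow_ne_zero _ h))
        (pow_ne_zero _ h)) (pow_ne_zero _ h)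
    try rw [div_add' _ _ _ hD, div_add' _ _ _ hD, div_add' _ _ _ hD, div_add' _ _ _ hD,
      div_mul_eq_mul_div, div_add' _ _ _ hD, div_mul_eq_mul_div, eq_div_iff hD]
    ring
  have hgc : ContinuousOn g (sphere (0:ℂ) ρ) :=
    (((((((hcd c₀ 5).add (hcd c₁ 4)).add (hcd c₂ 3)).add (hcd c₃ 2)).add
      continuousOn_const).add (hcm c₆ 1)).add (hcm c₇ 2)).add (hcm c₈ 3)
  have hic : ContinuousOn (fun z : ℂ => c₄ / z) (sphere (0:ℂ) ρ) :=
    continuousOn_const.div continuousOn_id hne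
  have hsplit : (∮ z in C(0, ρ), (g z + c₄ / z))
      = (∮ z in C(0, ρ), g z) + ∮ z in C(0, ρ), c₄ / z :=
    my_circleIntegral_add (hgc.circleIntegrable hρ.le) (hic.circleIntegrable hρ.le)
  have hg0 : (∮ z in C(0, ρ), g z) = 0 := by
    refine circleIntegral.integral_eq_zero_of_hasDerivWithinAt (f := fun z : ℂ =>
        (-c₀/4) * z^(-4:ℤ) + (-c₁/3) * z^(-3:ℤ) + (-c₂/2) * z^(-2:ℤ) + (-c₃) * z^(-1:ℤ)
          + c₅ * z^(1:ℤ) + (c₆/2) * z^(2:ℤ) + (c₇/3) * z^(3:ℤ) + (c₈/4) * z^(4:ℤ))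
      hρ.le fun z hz => ?_
    have h := hne z hz
    have H : HasDerivAt (fun z : ℂ =>
        (-c₀/4) * z^(-4:ℤ) + (-c₁/3) * z^(-3:ℤ) + (-c₂/2) * z^(-2:ℤ) + (-c₃) * z^(-1:ℤ)
          + c₅ * z^(1:ℤ) + (c₆/2) * z^(2:ℤ) + (c₇/3) * z^(3:ℤ) + (c₈/4) * z^(4:ℤ))
        ((-c₀/4) * ((-4:ℤ) * z^(-4-1:ℤ)) + (-c₁/3) * ((-3:ℤ) * z^(-3-1:ℤ))
          + (-c₂/2) * ((-2:ℤ) * z^(-2-1:ℤ)) + (-c₃) * ((-1:ℤ) * z^(-1-1:ℤ))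
          + c₅ * ((1:ℤ) * z^(1-1:ℤ)) + (c₆/2) * ((2:ℤ) * z^(2-1:ℤ))
          + (c₇/3) * ((3:ℤ) * z^(3-1:ℤ)) + (c₈/4) * ((4:ℤ) * z^(4-1:ℤ))) z :=
      ((((((((hasDerivAt_zpow _ z (Or.inl h)).const_mul _).add
        ((hasDerivAt_zpow _ z (Or.inl h)).const_mul _)).add
        ((hasDerivAt_zpow _ z (Or.inl h)).const_mul _)).add
        ((hasDerivAt_zpow _ z (Or.inl h)).const_mul _)).add
        ((hasDerivAt_zpow _ z (Or.inl h)).const_mul _)).add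
        ((hasDerivAt_zpow _ z (Or.inl h)).const_mul _)).add
        ((hasDerivAt_zpow _ z (Or.inl h)).const_mul _)).add
        ((hasDerivAt_zpow _ z (Or.inl h)).const_mul _)
    have heq : g z = ((-c₀/4) * ((-4:ℤ) * z^(-4-1:ℤ)) + (-c₁/3) * ((-3:ℤ) * z^(-3-1:ℤ))
          + (-c₂/2) * ((-2:ℤ) * z^(-2-1:ℤ)) + (-c₃) * ((-1:ℤ) * z^(-1-1:ℤ))
          + c₅ * ((1:ℤ) * z^(1-1:ℤ)) + (c₆/2) * ((2:ℤ) * z^(2-1:ℤ))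
          + (c₇/3) * ((3:ℤ) * z^(3-1:ℤ)) + (c₈/4) * ((4:ℤ) * z^(4-1:ℤ))) := by
      simp only [hg]
      simp only [show (-4-1:ℤ) = (-5:ℤ) by norm_num, show (-3-1:ℤ) = (-4:ℤ) by norm_num,
        show (-2-1:ℤ) = (-3:ℤ) by norm_num, show (-1-1:ℤ) = (-2:ℤ) by norm_num,
        show (1-1:ℤ) = (0:ℤ) by norm_num, show (2-1:ℤ) = (1:ℤ) by norm_num,
        show (3-1:ℤ) = (2:ℤ) by norm_num, show (4-1:ℤ) = (3:ℤ) by norm_num,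
        zpow_zero, zpow_one]
      push_cast
      simp only [zpow_neg, zpow_ofNat, ← inv_pow]
      ring
    rw [heq]
    exact H.hasDerivWithinAt
  have hinv : (∮ z in C(0, ρ), c₄ / z) = c₄ * (2 * Real.pi * Complex.I) := by
    simp only [div_eq_mul_inv]
    rw [circleIntegral.integral_const_mul]
    congr 1
    simpa using circleIntegral.integral_sub_center_inv (0:ℂ) hρ.ne'
  rw [hcongr, hsplit, hg0, hinv]
  ring

theorem stmt_4 (r : ℝ) (s t : ℂ) (ρ : ℝ) (hρ : 0 < ρ) :
    (∮ z in C(0, ρ),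
        Complex.I * ((r : ℂ) * z - 1) ^ 2 * (s * z - 1) ^ 2 * (t * z - 1) ^ 2 / z ^ 3)
      + (starRingEnd ℂ)
          (∮ z in C(0, ρ),
            Complex.I * (z + (r : ℂ)) ^ 2 * (z + (starRingEnd ℂ) s) ^ 2
              * (z + (starRingEnd ℂ) t) ^ 2 / z ^ 5)
      = -(4 * (Real.pi : ℂ)
            * ((r : ℂ) ^ 2 + s ^ 2 + t ^ 2 + 4 * (r : ℂ) * s + 4 * s * t + 4 * t * (r : ℂ))) := by
  have hne : ∀ z ∈ Metric.sphere (0:ℂ) ρ, z ≠ 0 := by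
    intro z hz h0
    rw [mem_sphere_zero_iff_norm, h0] at hz
    simp at hz
    exact hρ.ne' hz.symm
  set a : ℂ := (r : ℂ)
  set u : ℂ := (starRingEnd ℂ) s
  set v : ℂ := (starRingEnd ℂ) t
  have h1 : (∮ z in C(0, ρ),
        Complex.I * (a * z - 1) ^ 2 * (s * z - 1) ^ 2 * (t * z - 1) ^ 2 / z ^ 3)
      = 2 * Real.pi * Complex.I
          * (Complex.I * (a^2 + s^2 + t^2 + 4*a*s + 4*s*t + 4*t*a)) := by
    rw [show (∮ z in C(0, ρ),
          Complex.I * (a * z - 1) ^ 2 * (s * z - 1) ^ 2 * (t * z - 1) ^ 2 / z ^ 3)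
        = ∮ z in C(0, ρ),
          ((0:ℂ) + 0*z + Complex.I*z^2 + (Complex.I*(-2*(a+s+t)))*z^3
            + (Complex.I*(a^2 + s^2 + t^2 + 4*a*s + 4*s*t + 4*t*a))*z^4
            + (Complex.I*(-2*(a^2*s + a^2*t + a*s^2 + a*t^2 + s^2*t + s*t^2 + 4*a*s*t)))*z^5
            + (Complex.I*(a^2*s^2 + a^2*t^2 + s^2*t^2 + 4*(a^2*s*t + a*s^2*t + a*s*t^2)))*z^6
            + (Complex.I*(-2*(a^2*s^2*t + a^2*s*t^2 + a*s^2*t^2)))*z^7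
            + (Complex.I*(a^2*s^2*t^2))*z^8)/z^5 from
      circleIntegral.integral_congr hρ.le fun z hz => by
        have h := hne z hz
        rw [div_eq_div_iff (pow_ne_zero 3 h) (pow_ne_zero 5 h)]
        ring]
    rw [key_zint ρ hρ]
  have h2 : (∮ z in C(0, ρ),
        Complex.I * (z + a) ^ 2 * (z + u) ^ 2 * (z + v) ^ 2 / z ^ 5)
      = 2 * Real.pi * Complex.I
          * (Complex.I * (a^2 + u^2 + v^2 + 4*a*u + 4*u*v + 4*v*a)) := by
    rw [show (∮ z in C(0, ρ),
          Complex.I * (z + a) ^ 2 * (z + u) ^ 2 * (z + v) ^ 2 / z ^ 5)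
        = ∮ z in C(0, ρ),
          ((Complex.I*(a^2*u^2*v^2)) + (Complex.I*(2*(a^2*u^2*v + a^2*u*v^2 + a*u^2*v^2)))*z
            + (Complex.I*(a^2*u^2 + a^2*v^2 + u^2*v^2 + 4*(a^2*u*v + a*u^2*v + a*u*v^2)))*z^2
            + (Complex.I*(2*(a^2*u + a^2*v + a*u^2 + a*v^2 + u^2*v + u*v^2) + 8*a*u*v))*z^3
            + (Complex.I*(a^2 + u^2 + v^2 + 4*a*u + 4*u*v + 4*v*a))*z^4
            + (Complex.I*(2*(a+u+v)))*z^5 + Complex.I*z^6 + 0*z^7 + 0*z^8)/z^5 from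
      circleIntegral.integral_congr hρ.le fun z hz => by
        have h := hne z hz
        rw [div_eq_div_iff (pow_ne_zero 5 h) (pow_ne_zero 5 h)]
        ring]
    rw [key_zint ρ hρ]
  rw [h1, h2]
  simp only [a, u, v, map_mul, map_add, map_pow, map_ofNat, Complex.conj_I, Complex.conj_conj,
    Complex.conj_ofReal]
  ring_nf
  rw [Complex.I_sq]
  ring
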